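/- Let a ∈ (0,1], ρ ∈ (−1, 0) with ρ < A_a = (1−√(8a²+1))/(4a), and define f(t) = (t − 2aρt + a²)/(t(1 − ρ²t)) for t ∈ (0, 1]. Then f attains its unique minimum on (0,1] at t* = a/(ρ(2aρ − 1)), and t* ∈ (0,1). -/
import Mathlib


theorem stmt8 (a ρ : ℝ) (ha : 0 < a) (ha1 : a ≤ 1) (hρ1 : -1 < ρ) (hρ0 : ρ < 0)
    (hρ : ρ < (1 - Real.sqrt (8 * a ^ 2 + 1)) / (4 * a)) :
    a / (ρ * (2 * a * ρ - 1)) ∈ Set.Ioo (0 : ℝ) 1 ∧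
      ∀ t ∈ Set.Ioc (0 : ℝ) 1, t ≠ a / (ρ * (2 * a * ρ - 1)) →
        ((a / (ρ * (2 * a * ρ - 1))) - 2 * a * ρ * (a / (ρ * (2 * a * ρ - 1))) + a ^ 2) /
            ((a / (ρ * (2 * a * ρ - 1))) * (1 - ρ ^ 2 * (a / (ρ * (2 * a * ρ - 1))))) <
          (t - 2 * a * ρ * t + a ^ 2) / (t * (1 - ρ ^ 2 * t)) := by
  have hs : Real.sqrt (8 * a ^ 2 + 1) ^ 2 = 8 * a ^ 2 + 1 := Real.sq_sqrt (by positivity)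
  have hsnn : 0 ≤ Real.sqrt (8 * a ^ 2 + 1) := Real.sqrt_nonneg _
  have h4a : (0:ℝ) < 4 * a := by linarith
  have hρ' : 4 * a * ρ < 1 - Real.sqrt (8 * a ^ 2 + 1) := by
    have := (lt_div_iff₀ h4a).mp hρ; linarith
  have hkey : a < 2 * a * ρ ^ 2 - ρ := by nlinarith [hs, hsnn]
  have hd : 0 < ρ * (2 * a * ρ - 1) := by nlinarith
  have hdne : ρ * (2 * a * ρ - 1) ≠ 0 := ne_of_gt hd
  set T := a / (ρ * (2 * a * ρ - 1)) with hT
  have hT0 : 0 < T := div_pos ha hd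
  have hT1 : T < 1 := by rw [hT, div_lt_one hd]; nlinarith
  have hTd : T * (ρ * (2 * a * ρ - 1)) = a := div_mul_cancel₀ a hdne
  have hρ2 : ρ ^ 2 < 1 := by nlinarith
  have hdenT : 0 < T * (1 - ρ ^ 2 * T) :=
    mul_pos hT0 (by nlinarith [mul_nonneg (sq_nonneg ρ) (by linarith : (0:ℝ) ≤ 1 - T)])
  have hfT : (T - 2 * a * ρ * T + a ^ 2) / (T * (1 - ρ ^ 2 * T)) = (1 - 2 * a * ρ) ^ 2 := by
    rw [div_eq_iff (ne_of_gt hdenT)]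
    linear_combination (T * (ρ * (2 * a * ρ - 1)) - a) * hTd
  refine ⟨⟨hT0, hT1⟩, ?_⟩
  intro t ht htne
  have ht0 : 0 < t := ht.1
  have ht1 : t ≤ 1 := ht.2
  have hden : 0 < t * (1 - ρ ^ 2 * t) :=
    mul_pos ht0 (by nlinarith [mul_nonneg (sq_nonneg ρ) (by linarith : (0:ℝ) ≤ 1 - t)])
  rw [hfT, lt_div_iff₀ hden]
  have h3 : a - t * (ρ * (2 * a * ρ - 1)) ≠ 0 := by
    intro h
    apply htne
    rw [hT, eq_div_iff hdne]
    linarith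
  have h4 : 0 < (a - t * (ρ * (2 * a * ρ - 1))) ^ 2 :=
    lt_of_le_of_ne (sq_nonneg _) (Ne.symm (pow_ne_zero 2 h3))
  nlinarith [h4]
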